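/- Let n ≥ 2 and let T be a semistandard Young tableau of some partition shape with entries in {1,…,2n} whose reading word has dominant restriction; form res(T) by replacing each entry w > n by the barred letter \overline{2n+1−w}. Call a column of res(T) standard if its entries, read from the top, are 1, 2, …, k for some k. If D is the rightmost column of res(T) that is not standard, then there is an integer s ≥ 1 such that the topmost s entries of D are 1, 2, …, s, all entries of D below these are barred letters, and every such barred entry \overline{l} satisfies l ≤ s. -/

import Mathlib

/-- Component `j` (0-indexed, `j < n`) of the vector in `ℤ^n` assigned to the letter
`i ∈ {1,…,2n}`: the letter `i` is sent to the standard basis vector `e_i` if `1 ≤ i ≤ n`,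
and to `−e_{2n+1−i}` if `n < i ≤ 2n`. -/
def letterVec (n i j : ℕ) : ℤ :=
  (if i = j + 1 then 1 else 0) - (if i + j = 2 * n then 1 else 0)

/-- Component `j` (0-indexed) of the sum of the vectors assigned to the letters of `w`. -/
def resSum (n : ℕ) (w : List ℕ) (j : ℕ) : ℤ :=
  (w.map fun i => letterVec n i j).sum

/-- A word `w` over `{1,…,2n}` has *dominant restriction* if every partial sum `p` of the
assigned vectors (over prefixes of `w`) satisfies `p 0 ≥ p 1 ≥ ⋯ ≥ p (n-1) ≥ 0`. -/
def DominantRes (n : ℕ) (w : List ℕ) : Prop :=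
  ∀ k : ℕ,
    (∀ j : ℕ, j + 1 < n → resSum n (w.take k) (j + 1) ≤ resSum n (w.take k) j) ∧
    0 ≤ resSum n (w.take k) (n - 1)

/-- A word over the positive integers is a *lattice word* if every prefix contains,
for each `i ≥ 1`, at least as many letters `i` as letters `i+1`. -/
def IsLatticeWord (w : List ℕ) : Prop :=
  ∀ k i : ℕ, 1 ≤ i → (w.take k).count (i + 1) ≤ (w.take k).count i

/-- The entries of row `r` (0-indexed) of `T` lying in the skew shape `lam/nu`,
read from right to left. -/
def skewRowWord (T : ℕ → ℕ → ℕ) (nu lam : ℕ → ℕ) (r : ℕ) : List ℕ :=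
  ((List.range' (nu r) (lam r - nu r)).map (T r)).reverse

/-- The reading word (rows right to left, top row to bottom row) of a skew tableau
whose rows are `0, …, k-1`. -/
def skewReadingWord (T : ℕ → ℕ → ℕ) (nu lam : ℕ → ℕ) (k : ℕ) : List ℕ :=
  ((List.range k).map (skewRowWord T nu lam)).flatten

/-- `T` is a skew semistandard tableau of shape `lam/nu`: entries are positive,
rows weakly increase from left to right, and columns strictly increase from top to bottom.
Rows are indexed `0, 1, 2, …` from the top and columns `0, 1, 2, …` from the left;
the cells of row `r` are the `c` with `nu r ≤ c < lam r`. -/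
def IsSkewSSYT (T : ℕ → ℕ → ℕ) (nu lam : ℕ → ℕ) : Prop :=
  (∀ r c, nu r ≤ c → c < lam r → 1 ≤ T r c) ∧
  (∀ r c c', nu r ≤ c → c ≤ c' → c' < lam r → T r c ≤ T r c') ∧
  (∀ r r' c, r < r' → nu r ≤ c → c < lam r → nu r' ≤ c → c < lam r' → T r c < T r' c)

/-- `T` is a semistandard Young tableau of (straight) shape `lam` with entries
in `{1, …, N}`. -/
def IsSSYT (T : ℕ → ℕ → ℕ) (lam : ℕ → ℕ) (N : ℕ) : Prop :=
  IsSkewSSYT T (fun _ => 0) lam ∧ ∀ r c, c < lam r → T r c ≤ N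

/-- The reading word of a straight-shape tableau with rows `0, …, k-1`. -/
def readingWord (T : ℕ → ℕ → ℕ) (lam : ℕ → ℕ) (k : ℕ) : List ℕ :=
  skewReadingWord T (fun _ => 0) lam k

/-- `T` vanishes outside the skew shape `lam/nu` (a normalization used when counting
tableaux, so that a tableau is determined by its entries inside the shape). -/
def ZeroOutside (T : ℕ → ℕ → ℕ) (nu lam : ℕ → ℕ) : Prop :=
  ∀ r c, c < nu r ∨ lam r ≤ c → T r c = 0

/-- The partition with (at most) three rows `a ≥ b ≥ c`, as a row-length function. -/
def shape3 (a b c : ℕ) : ℕ → ℕ :=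
  fun r => if r = 0 then a else if r = 1 then b else if r = 2 then c else 0

/-- `T` is a Littlewood–Richardson tableau of skew shape `lam/nu` and weight `eta`
(with rows `0, …, k-1`): a skew semistandard tableau whose reading word is a lattice
word and which has exactly `eta i` entries equal to `i + 1` for every `i`. -/
def IsLRTableau (T : ℕ → ℕ → ℕ) (nu lam eta : ℕ → ℕ) (k : ℕ) : Prop :=
  IsSkewSSYT T nu lam ∧ IsLatticeWord (skewReadingWord T nu lam k) ∧
    ∀ i : ℕ, (skewReadingWord T nu lam k).count (i + 1) = eta i

/-- The `n`-symplectic Sundaram condition for a tableau of skew shape `lam/nu`, where `l`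
is the length of the longest column of the weight: for each `i ≤ l/2`, the letter `2i+1`
does not occur strictly below row `n + i` (rows counted `1, 2, …` from the top; in the
0-indexed row `r` this means `r ≥ n + i`). -/
def IsSundaram (n l : ℕ) (T : ℕ → ℕ → ℕ) (nu lam : ℕ → ℕ) : Prop :=
  ∀ i : ℕ, i ≤ l / 2 → ∀ r c, n + i ≤ r → nu r ≤ c → c < lam r → T r c ≠ 2 * i + 1
/-- A column `c` of `res(T)` is *standard* if its entries, read from the top, are the
unbarred letters `1, 2, …, k`; in terms of the original tableau `T` (whose entry `w ≤ n`
is the unbarred letter `w` and whose entry `w > n` is the barred letter `2n+1−w`), this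
says that each cell `(r, c)` of the column carries `T r c = r + 1` with `r + 1 ≤ n`. -/
def ColStandard (n : ℕ) (T : ℕ → ℕ → ℕ) (lam : ℕ → ℕ) (c : ℕ) : Prop :=
  ∀ r, c < lam r → T r c = r + 1 ∧ r + 1 ≤ n


lemma letterVec_of_le (n i j : ℕ) (hi : i ≤ n) (hj : j < n) :
    letterVec n i j = if i = j + 1 then 1 else 0 := by
  unfold letterVec
  split_ifs with h1 h2 h3 <;> omega

lemma resSum_append (n : ℕ) (w v : List ℕ) (j : ℕ) :
    resSum n (w ++ v) j = resSum n w j + resSum n v j := by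
  simp [resSum]

lemma resSum_replicate (n m a j : ℕ) :
    resSum n (List.replicate m a) j = m * letterVec n a j := by
  simp [resSum]

lemma resSum_rows (n : ℕ) (f : ℕ → ℕ) (t j : ℕ) (ht : t ≤ n) (hj : j < n) :
    resSum n (((List.range t).map (fun r => List.replicate (f r) (r+1))).flatten) j
      = if j < t then (f j : ℤ) else 0 := by
  induction t with
  | zero => simp [resSum]
  | succ t ih =>
    rw [List.range_succ, List.map_append, List.flatten_append, resSum_append,
      ih (by omega)]
    simp only [List.map_cons, List.map_nil, List.flatten_cons, List.flatten_nil,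
      List.append_nil]
    rw [resSum_replicate, letterVec_of_le n (t+1) j ht hj]
    rcases Nat.lt_trichotomy j t with h | h | h
    · rw [if_pos h, if_neg (show ¬(t+1 = j+1) by omega), if_pos (show j < t+1 by omega)]
      ring
    · subst h; simp
    · rw [if_neg (show ¬(j < t) by omega), if_neg (show ¬(t+1 = j+1) by omega),
        if_neg (show ¬(j < t+1) by omega)]
      ring


/-- Let `n ≥ 2` and let `T` be a semistandard Young tableau of some
partition shape with entries in `{1,…,2n}` whose reading word has dominant restriction,
and form `res(T)` by replacing each entry `w > n` by the barred letter `2n+1−w`. If `d` is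
the rightmost column of `res(T)` that is not standard, then there is `s ≥ 1` such that the
topmost `s` entries of column `d` are the unbarred letters `1, 2, …, s` and every entry
below them is a barred letter `l̄` (i.e. `T r d > n` with `l = 2n+1−T r d`) with `l ≤ s`. -/
theorem stmt9 (n : ℕ) (hn : 2 ≤ n) (lam : ℕ → ℕ)
    (hlam : ∀ r, lam (r + 1) ≤ lam r) (k : ℕ) (hk : ∀ r, k ≤ r → lam r = 0)
    (T : ℕ → ℕ → ℕ) (hT : IsSSYT T lam (2 * n))
    (hdom : DominantRes n (readingWord T lam k))
    (d : ℕ) (hd : d < lam 0)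
    (hdns : ¬ ColStandard n T lam d)
    (hright : ∀ c, d < c → ColStandard n T lam c) :
    ∃ s : ℕ, 1 ≤ s ∧
      (∀ r, r < s → d < lam r ∧ T r d = r + 1 ∧ r + 1 ≤ n) ∧
      (∀ r, s ≤ r → d < lam r → n < T r d ∧ 2 * n + 1 - T r d ≤ s) := by
  unfold IsSSYT IsSkewSSYT at hT
  obtain ⟨⟨hpos, hrow, hcol⟩, hle⟩ := hT
  -- lam is antitone
  have hanti : ∀ ⦃r r' : ℕ⦄, r ≤ r' → lam r' ≤ lam r := by
    intro r r' h
    obtain ⟨t, rfl⟩ := Nat.exists_eq_add_of_le h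
    clear h
    induction t with
    | zero => simp
    | succ m ih => exact le_trans (hlam (r + m)) ih
  -- column lower bound
  have hlb : ∀ r c, c < lam r → r + 1 ≤ T r c := by
    intro r
    induction r with
    | zero => intro c hc; exact hpos 0 c (Nat.zero_le _) hc
    | succ m ih =>
      intro c hc
      have hc' : c < lam m := lt_of_lt_of_le hc (hlam m)
      have h1 := hcol m (m+1) c (by omega) (Nat.zero_le _) hc' (Nat.zero_le _) hc
      have h2 := ih c hc'
      omega
  -- s : the first row where column d is not standard
  have hex : ∃ r, ¬(T r d = r + 1 ∧ r + 1 ≤ n) := by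
    by_contra hno
    push_neg at hno
    exact hdns (fun r _ => ⟨(hno r).1, (hno r).2⟩)
  set s := Nat.find hex with hsdef
  have hsspec : ¬(T s d = s + 1 ∧ s + 1 ≤ n) := Nat.find_spec hex
  have hslt : ∀ r, r < s → T r d = r + 1 ∧ r + 1 ≤ n := by
    intro r hr
    have := Nat.find_min hex hr
    tauto
  have hsn : s ≤ n := by
    by_contra h
    push_neg at h
    have := hslt n h
    omega
  have hds : d < lam s := by
    by_contra h
    push_neg at h
    apply hdns
    intro r hr
    have hrlt : r < s := by
      by_contra h2
      push_neg at h2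
      have := hanti h2
      omega
    exact hslt r hrlt
  have hlams : lam s = d + 1 := by
    by_contra h
    have h2 : d + 1 < lam s := by omega
    have hstd := hright (d+1) (by omega) s h2
    have h3 : T s d ≤ T s (d+1) := hrow s d (d+1) (Nat.zero_le _) (by omega) h2
    have h4 := hlb s d hds
    exact hsspec ⟨by omega, hstd.2⟩
  have hsk : s < k := by
    by_contra h
    push_neg at h
    have := hk s h
    omega
  set b := T s d with hb
  have hbub : b ≤ 2 * n := hle s d hds
  have hblb : s + 1 ≤ b := hlb s d hds
  -- rows above s are constant
  have hrowconst : ∀ r, r < s → ∀ c, c < lam r → T r c = r + 1 := by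
    intro r hr c hc
    rcases Nat.lt_or_ge d c with h | h
    · exact (hright c h r hc).1
    · have h1 := hlb r c hc
      have hdr : d < lam r := lt_of_lt_of_le hds (hanti hr.le)
      have h2 := hrow r c d (Nat.zero_le _) h hdr
      have h3 := (hslt r hr).1
      omega
  -- reading word decomposition
  set A : List ℕ := ((List.range s).map (fun r => List.replicate (lam r) (r+1))).flatten
    with hA
  have hrowW : ∀ r, r < s → skewRowWord T (fun _ => 0) lam r = List.replicate (lam r) (r+1) := by
    intro r hr
    unfold skewRowWord
    rw [List.eq_replicate_iff]
    constructor
    · simp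
    · intro x hx
      simp only [List.mem_reverse, List.mem_map, List.mem_range'_1] at hx
      obtain ⟨c, hc, rfl⟩ := hx
      exact hrowconst r hr c (by omega)
  have hrowWs : skewRowWord T (fun _ => 0) lam s
      = b :: ((List.range' 0 d).map (T s)).reverse := by
    unfold skewRowWord
    rw [Nat.sub_zero, hlams, show d + 1 = d + 1 * 1 by ring]
    rw [show List.range' 0 (d + 1 * 1) = List.range' 0 d ++ [0 + 1 * d] from
      List.range'_concat (s := 0) (n := d)]
    simp [hb]
  have hsplit : ∃ rest : List ℕ, readingWord T lam k = A ++ (b :: rest) := by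
    refine ⟨((List.range' 0 d).map (T s)).reverse
      ++ ((List.range' (s+1) (k-s-1)).map (skewRowWord T (fun _ => 0) lam)).flatten, ?_⟩
    unfold readingWord skewReadingWord
    rw [List.range_eq_range']
    rw [show k = s + (k - s) by omega,
      show List.range' 0 (s + (k - s)) = List.range' 0 s ++ List.range' (0 + s) (k - s) from
        (List.range'_append_1 (s := 0) (m := s) (n := k-s)).symm ▸ (by rfl)]
    rw [show k - s = (k - s - 1) + 1 by omega, Nat.zero_add,
      show List.range' s (k - s - 1 + 1) = s :: List.range' (s+1) (k-s-1) from
        List.range'_succ (s := s) (n := k-s-1) (step := 1)]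
    rw [List.map_append, List.flatten_append, List.map_cons, List.flatten_cons, hrowWs]
    have hAeq : (List.map (skewRowWord T (fun _ => 0) lam) (List.range' 0 s)).flatten = A := by
      rw [hA, ← List.range_eq_range']
      congr 1
      apply List.map_congr_left
      intro r hr
      exact hrowW r (List.mem_range.mp hr)
    rw [hAeq]
    simp
  obtain ⟨rest, hw⟩ := hsplit
  set L := A.length + 1 with hL
  have htake : (readingWord T lam k).take L = A ++ [b] := by
    rw [hw, hL, List.take_append]
    simp
  have hP : ∀ j, j < n → resSum n ((readingWord T lam k).take L) j
      = (if j < s then (lam j : ℤ) else 0) + letterVec n b j := by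
    intro j hj
    rw [htake, resSum_append, hA, resSum_rows n lam s j hsn hj]
    simp [resSum]
  -- key inequality
  have hkey : 2 * n + 1 - s ≤ b := by
    by_contra hbig
    push_neg at hbig
    obtain ⟨hineq, hlast⟩ := hdom L
    rcases le_or_gt b n with hbn | hbn
    · -- unbarred letter: contradiction
      have hb2 : s + 2 ≤ b := by
        by_contra h
        push_neg at h
        exact hsspec ⟨by omega, by omega⟩
      have h12 := hineq (b-2) (by omega)
      rw [show b - 2 + 1 = b - 1 by omega, hP (b-1) (by omega),
        hP (b-2) (by omega)] at h12
      unfold letterVec at h12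
      split_ifs at h12 <;> omega
    · -- barred letter: contradiction
      rcases eq_or_lt_of_le (show 2*n - b ≤ n - 1 by omega) with hj0 | hj0
      · have := hlast
        rw [hP (n-1) (by omega)] at this
        unfold letterVec at this
        split_ifs at this <;> omega
      · have h12 := hineq (2*n - b) (by omega)
        rw [hP (2*n - b) (by omega), hP (2*n - b + 1) (by omega)] at h12
        unfold letterVec at h12
        split_ifs at h12 <;> omega
  -- conclusion
  refine ⟨s, by omega, ?_, ?_⟩
  · intro r hr
    exact ⟨lt_of_lt_of_le hds (hanti hr.le), (hslt r hr).1, (hslt r hr).2⟩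
  · intro r hrs hdr
    have hchain : ∀ t, d < lam (s + t) → b ≤ T (s + t) d := by
      intro t
      induction t with
      | zero => intro _; simp [hb]
      | succ m ih =>
        intro hcell
        have hcell2 : d < lam (s+m+1) := hcell
        have hcell' : d < lam (s+m) := lt_of_lt_of_le hcell2 (hlam (s+m))
        have h1 := hcol (s+m) (s+m+1) d (by omega) (Nat.zero_le _) hcell' (Nat.zero_le _)
          hcell2
        have h2 := ih hcell'
        show b ≤ T (s+m+1) d
        omega
    have hch := hchain (r - s) (by rwa [show s + (r - s) = r by omega])
    rw [show s + (r - s) = r by omega] at hch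
    constructor <;> omega
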